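/- arXiv:1903.06371 — 2 statements merged into one kernel-verified Lean document; each statement's English description precedes it below -/
import Mathlib

section
/- In the implicit-function setup for η, assume additionally that the d×d matrix β − Σ_{i=1}^{n} E[Z_i] γ_i κ_i^T is invertible, and define A ∈ ℝ^d by A^T = (Σ_{i=1}^{n} E[Z_i] κ_i^T) (β − Σ_{i=1}^{n} E[Z_i] γ_i κ_i^T)^{-1}. Then u*'(0) = A and η'(0) = A^T b + Σ_{i=1}^{n} λ_i E[Z_i] (1 + A^T γ_i). -/
open MeasureTheory Real Filter

-- sub-lemma: derivative of the mgf at 0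
theorem psi_deriv {Ω : Type*} [MeasurableSpace Ω] (μ : Measure Ω) [IsProbabilityMeasure μ]
    (Z : Ω → ℝ) (hZmeas : Measurable Z) (hZnn : ∀ ω, 0 ≤ Z ω)
    (ε₀ : ℝ) (hε₀ : 0 < ε₀)
    (hmgf : ∀ θ : ℝ, |θ| < ε₀ → Integrable (fun ω => Real.exp (θ * Z ω)) μ) :
    HasDerivAt (fun s : ℝ => ∫ ω, Real.exp (s * Z ω) ∂μ) (∫ ω, Z ω ∂μ) 0 := by
  have hb : Integrable (fun ω => (4/ε₀) * Real.exp ((ε₀/2) * Z ω)) μ := by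
    refine ((hmgf (ε₀/2) ?_)).const_mul _
    rw [abs_of_pos (by linarith)]; linarith
  have key := hasDerivAt_integral_of_dominated_loc_of_deriv_le
    (F := fun s ω => Real.exp (s * Z ω)) (F' := fun s ω => Z ω * Real.exp (s * Z ω))
    (x₀ := (0:ℝ)) (bound := fun ω => (4/ε₀) * Real.exp ((ε₀/2) * Z ω)) (s := Metric.ball 0 (ε₀/4))
    (Metric.ball_mem_nhds _ (by linarith))
    (Eventually.of_forall fun s => ((hZmeas.const_mul s).exp).aestronglyMeasurable)
    (hmgf 0 (by simpa using hε₀))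
    ((hZmeas.mul ((hZmeas.const_mul (0:ℝ)).exp)).aestronglyMeasurable)
    (Eventually.of_forall ?_) hb (Eventually.of_forall ?_)
  · have := key.2
    simpa using this
  · intro ω s hs
    rw [Metric.mem_ball, Real.dist_eq, sub_zero] at hs
    have hZ := hZnn ω
    have h1 : (ε₀/4) * Z ω ≤ Real.exp ((ε₀/4) * Z ω) := by
      have := Real.add_one_le_exp ((ε₀/4) * Z ω); linarith
    have h2 : Real.exp (s * Z ω) ≤ Real.exp ((ε₀/4) * Z ω) := by
      apply Real.exp_le_exp.2
      have : s ≤ ε₀/4 := le_of_lt (lt_of_le_of_lt (le_abs_self s) hs)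
      nlinarith
    have hZle : Z ω ≤ (4/ε₀) * Real.exp ((ε₀/4) * Z ω) := by
      rw [div_mul_eq_mul_div, le_div_iff₀ hε₀]
      nlinarith
    have : ‖Z ω * Real.exp (s * Z ω)‖ = Z ω * Real.exp (s * Z ω) := by
      rw [Real.norm_eq_abs, abs_of_nonneg]
      positivity
    rw [this]
    calc Z ω * Real.exp (s * Z ω)
        ≤ ((4/ε₀) * Real.exp ((ε₀/4) * Z ω)) * Real.exp ((ε₀/4) * Z ω) := by
          apply mul_le_mul hZle h2 (Real.exp_pos _).le
          positivity
      _ = (4/ε₀) * Real.exp ((ε₀/2) * Z ω) := by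
          rw [mul_assoc, ← Real.exp_add]; ring_nf
  · intro ω s hs
    have : HasDerivAt (fun s : ℝ => s * Z ω) (Z ω) s := hasDerivAt_mul_const _
    simpa [mul_comm] using this.exp


/-- in the implicit-function setup for `η`, if
`β − ∑ᵢ E[Zᵢ] γᵢ κᵢᵀ` is invertible and `Aᵀ = (∑ᵢ E[Zᵢ] κᵢᵀ)(β − ∑ᵢ E[Zᵢ] γᵢ κᵢᵀ)⁻¹`, then
`u*'(0) = A` and `η'(0) = Aᵀ b + ∑ᵢ λᵢ E[Zᵢ](1 + Aᵀ γᵢ)`. -/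
theorem implicit_eta_first_derivative_at_zero
    {Ω : Type*} [MeasurableSpace Ω] (μ : MeasureTheory.Measure Ω) [IsProbabilityMeasure μ]
    (n d : ℕ) (b : Fin d → ℝ) (β : Matrix (Fin d) (Fin d) ℝ)
    (α : Fin d → Matrix (Fin d) (Fin d) ℝ) (hα : ∀ j, (α j).IsSymm)
    (lam : Fin n → ℝ) (hlam : ∀ i, 0 ≤ lam i)
    (κ : Fin n → Fin d → ℝ) (γ : Fin n → Fin d → ℝ)
    -- nonnegative random variables with m.g.f. finite near `0`
    (Z : Fin n → Ω → ℝ) (hZmeas : ∀ i, Measurable (Z i)) (hZnn : ∀ i ω, 0 ≤ Z i ω)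
    (ε₀ : ℝ) (hε₀ : 0 < ε₀)
    (hZmgf : ∀ i, ∀ θ : ℝ, |θ| < ε₀ → Integrable (fun ω => Real.exp (θ * Z i ω)) μ)
    -- a neighborhood `U` of `0`
    (U : Set ℝ) (hUopen : IsOpen U) (hU0 : (0 : ℝ) ∈ U)
    -- the implicit function `u*`
    (ustar : ℝ → Fin d → ℝ) (hu0 : ustar 0 = 0)
    (husmooth : ContDiffOn ℝ 2 ustar U)
    -- the relevant moments are finite
    (hZint : ∀ i : Fin n, ∀ m : ℕ, m ≤ 2 → ∀ θ ∈ U,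
      Integrable (fun ω => Z i ω ^ m
        * Real.exp ((θ + ∑ a, ustar θ a * γ i a) * Z i ω)) μ)
    -- the defining system of nonlinear equations for `u*`
    (heq : ∀ θ ∈ U, ∀ j : Fin d,
      (∑ i, ustar θ i * β i j)
        - (1/2) * (∑ i, ∑ i', ustar θ i * α j i i' * ustar θ i')
        - (∑ i : Fin n,
            ((∫ ω, Real.exp ((θ + ∑ a, ustar θ a * γ i a) * Z i ω) ∂μ) - 1) * κ i j) = 0)
    -- the definition of `η`
    (η : ℝ → ℝ)
    (hη : ∀ θ : ℝ, η θ = (∑ a, ustar θ a * b a)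
      + ∑ i : Fin n, lam i
          * ((∫ ω, Real.exp ((θ + ∑ a, ustar θ a * γ i a) * Z i ω) ∂μ) - 1))
    -- `M = β − ∑ᵢ E[Zᵢ] γᵢ κᵢᵀ` is invertible
    (M : Matrix (Fin d) (Fin d) ℝ)
    (hM : M = β - ∑ i : Fin n, (∫ ω, Z i ω ∂μ) • Matrix.vecMulVec (γ i) (κ i))
    (hMinv : IsUnit M.det)
    -- `Aᵀ = (∑ᵢ E[Zᵢ] κᵢᵀ) M⁻¹`
    (A : Fin d → ℝ)
    (hA : A = Matrix.mulVec (Matrix.transpose M⁻¹)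
      (fun a => ∑ i : Fin n, (∫ ω, Z i ω ∂μ) * κ i a)) :
    (∀ j : Fin d, deriv (fun θ' => ustar θ' j) 0 = A j) ∧
    deriv η 0 = (∑ a, A a * b a)
      + ∑ i : Fin n, lam i * (∫ ω, Z i ω ∂μ) * (1 + ∑ a, A a * γ i a) := by
  
  classical
  set E : Fin n → ℝ := fun i => ∫ ω, Z i ω ∂μ with hE
  set u' : Fin d → ℝ := fun a => deriv (fun θ => ustar θ a) 0 with hu'
  set c : Fin n → ℝ := fun i => 1 + ∑ a, u' a * γ i a with hc
  -- derivatives of the components of ustar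
  have hudiff : DifferentiableAt ℝ ustar 0 :=
    ((husmooth.differentiableOn (by norm_num)).differentiableAt (hUopen.mem_nhds hU0))
  have hda : ∀ a : Fin d, HasDerivAt (fun θ => ustar θ a) (u' a) 0 := fun a =>
    ((differentiableAt_pi.1 hudiff) a).hasDerivAt
  -- derivative of the exponent
  have hgd : ∀ i : Fin n,
      HasDerivAt (fun θ => θ + ∑ a, ustar θ a * γ i a) (c i) 0 := by
    intro i
    have h1 : HasDerivAt (fun θ : ℝ => ∑ a, ustar θ a * γ i a) (∑ a, u' a * γ i a) 0 :=
      HasDerivAt.fun_sum fun a _ => (hda a).mul_const (γ i a)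
    simpa [hc] using (hasDerivAt_id (0:ℝ)).fun_add h1
  -- derivative of the mgf-type integrals
  have hφ : ∀ i : Fin n,
      HasDerivAt (fun θ => ∫ ω, Real.exp ((θ + ∑ a, ustar θ a * γ i a) * Z i ω) ∂μ)
        (E i * c i) 0 := by
    intro i
    have hΨ : HasDerivAt (fun s : ℝ => ∫ ω, Real.exp (s * Z i ω) ∂μ) (E i) 0 :=
      psi_deriv μ (Z i) (hZmeas i) (hZnn i) ε₀ hε₀ (hZmgf i)
    have h0 : (0:ℝ) + ∑ a, ustar 0 a * γ i a = 0 := by simp [hu0]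
    have h2 : HasDerivAt (fun s : ℝ => ∫ ω, Real.exp (s * Z i ω) ∂μ) (E i)
        ((fun θ : ℝ => θ + ∑ a, ustar θ a * γ i a) 0) := by
      show HasDerivAt _ _ ((0:ℝ) + ∑ a, ustar 0 a * γ i a)
      rw [h0]; exact hΨ
    exact h2.comp 0 (hgd i)
  -- the key linear equation obtained by differentiating the defining system
  have key : ∀ j : Fin d, ∑ i, u' i * β i j = ∑ i : Fin n, (E i * c i) * κ i j := by
    intro j
    have h1 : HasDerivAt (fun θ => ∑ i, ustar θ i * β i j) (∑ i, u' i * β i j) 0 :=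
      HasDerivAt.fun_sum fun i _ => (hda i).mul_const (β i j)
    have h2 : HasDerivAt (fun θ => ∑ i, ∑ i', ustar θ i * α j i i' * ustar θ i')
        (∑ i, ∑ i', (u' i * α j i i' * ustar 0 i' + ustar 0 i * α j i i' * u' i')) 0 :=
      HasDerivAt.fun_sum fun i _ => HasDerivAt.fun_sum fun i' _ =>
        ((hda i).mul_const (α j i i')).mul (hda i')
    have h3 : HasDerivAt (fun θ => ∑ i : Fin n,
        ((∫ ω, Real.exp ((θ + ∑ a, ustar θ a * γ i a) * Z i ω) ∂μ) - 1) * κ i j)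
        (∑ i : Fin n, (E i * c i) * κ i j) 0 :=
      HasDerivAt.fun_sum fun i _ => ((hφ i).sub_const 1).mul_const (κ i j)
    have hF := (h1.sub (h2.const_mul (1/2))).sub h3
    have hEq : (fun _ : ℝ => (0:ℝ)) =ᶠ[nhds 0]
        (fun θ => (∑ i, ustar θ i * β i j)
          - (1/2) * (∑ i, ∑ i', ustar θ i * α j i i' * ustar θ i')
          - (∑ i : Fin n,
              ((∫ ω, Real.exp ((θ + ∑ a, ustar θ a * γ i a) * Z i ω) ∂μ) - 1) * κ i j)) := by
      filter_upwards [hUopen.mem_nhds hU0] with θ hθ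
      exact (heq θ hθ j).symm
    have hzero := hF.congr_of_eventuallyEq hEq
    have := hzero.unique (hasDerivAt_const 0 0)
    have hq : (∑ i, ∑ i', (u' i * α j i i' * ustar 0 i' + ustar 0 i * α j i i' * u' i')) = 0 := by
      simp [hu0]
    rw [hq] at this
    linarith [this]
  -- solve the linear system: u' = A
  have hv : Matrix.vecMul u' M = fun a => ∑ i : Fin n, E i * κ i a := by
    funext j
    have expand : Matrix.vecMul u' M j
        = (∑ i, u' i * β i j) - ∑ i : Fin n, E i * (∑ a, u' a * γ i a) * κ i j := by
      simp only [hE, hM, Matrix.vecMul, dotProduct, Matrix.sub_apply, Matrix.sum_apply,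
        Matrix.smul_apply, Matrix.vecMulVec_apply, smul_eq_mul, mul_sub,
        Finset.sum_sub_distrib]
      congr 1
      simp only [Finset.mul_sum, Finset.sum_mul]
      rw [Finset.sum_comm]
      exact Finset.sum_congr rfl fun i _ => Finset.sum_congr rfl fun a _ => by ring
    rw [expand, key j]
    have : ∑ i : Fin n, E i * c i * κ i j
        = ∑ i : Fin n, (E i * κ i j + E i * (∑ a, u' a * γ i a) * κ i j) := by
      congr 1; funext i; rw [hc]; ring
    rw [this, Finset.sum_add_distrib]
    ring
  have huA : u' = A := by
    have hMt : IsUnit (Matrix.transpose M).det := by rwa [Matrix.det_transpose]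
    have h1 : Matrix.mulVec (Matrix.transpose M) u' = fun a => ∑ i : Fin n, E i * κ i a := by
      rw [← hv]; exact (Matrix.mulVec_transpose M u')
    have h2 := congrArg (Matrix.mulVec (Matrix.transpose M)⁻¹) h1
    rw [Matrix.mulVec_mulVec, Matrix.nonsing_inv_mul _ hMt, Matrix.one_mulVec] at h2
    rw [h2, hA, Matrix.transpose_nonsing_inv]
  constructor
  · intro j; rw [← huA]
  · -- derivative of η
    have hηfun : η = fun θ => (∑ a, ustar θ a * b a)
      + ∑ i : Fin n, lam i
          * ((∫ ω, Real.exp ((θ + ∑ a, ustar θ a * γ i a) * Z i ω) ∂μ) - 1) := funext hη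
    have hd1 : HasDerivAt (fun θ => ∑ a, ustar θ a * b a) (∑ a, u' a * b a) 0 :=
      HasDerivAt.fun_sum fun a _ => (hda a).mul_const (b a)
    have hd2 : HasDerivAt (fun θ => ∑ i : Fin n, lam i
          * ((∫ ω, Real.exp ((θ + ∑ a, ustar θ a * γ i a) * Z i ω) ∂μ) - 1))
        (∑ i : Fin n, lam i * (E i * c i)) 0 :=
      HasDerivAt.fun_sum fun i _ => ((hφ i).sub_const 1).const_mul (lam i)
    have hdη : HasDerivAt η ((∑ a, u' a * b a) + ∑ i : Fin n, lam i * (E i * c i)) 0 := by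
      rw [hηfun]; exact hd1.add hd2
    rw [hdη.deriv, ← huA]
    congr 1
    refine Finset.sum_congr rfl fun i _ => ?_
    rw [hc]; ring
end

section
/- In the implicit-function setup for η, assume u* is k-times continuously differentiable near 0 and that E[Z_i^m e^{θ' Z_i}] < ∞ for all m ≤ k and θ' in a neighborhood of the relevant exponents. Then for every k ≥ 1 and θ in the neighborhood, η^{(k)}(θ) = ((u*)^{(k)}(θ))^T b + Σ_{i=1}^{n} λ_i Σ_{j=0}^{k} C(k,j) Σ_{(m_1,…,m_j) ∈ S_j} ( j! · E[ Z_i^{k-j} e^{θ Z_i} e^{u*(θ)^T γ_i Z_i} Π_{ℓ=1}^{j} ((u*)^{(ℓ)}(θ)^T γ_i Z_i)^{m_ℓ} ] ) / ( m_1! (1!)^{m_1} m_2! (2!)^{m_2} ⋯ m_j! (j!)^{m_j} ), where C(k,j) is the binomial coefficient and the j = 0 term is λ_i E[Z_i^k e^{(θ + u*(θ)^T γ_i) Z_i}]. -/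
open MeasureTheory Real Filter
open Set (EqOn)

/-- The index set `S_j` of Faà di Bruno's formula: the set of tuples `(m_1, …, m_j)` of
nonnegative integers with `1·m_1 + 2·m_2 + ⋯ + j·m_j = j` (here `m ℓ` is `m_{ℓ+1}`). -/
def faaDiBrunoS (j : ℕ) : Finset (Fin j → ℕ) :=
  ((Finset.univ : Finset (Fin j → Fin (j + 1))).image
      (fun (m : Fin j → Fin (j + 1)) (ℓ : Fin j) => (m ℓ : ℕ))).filter
    fun m => (∑ ℓ : Fin j, ((ℓ : ℕ) + 1) * m ℓ) = j

lemma mem_faaDiBrunoS {q : ℕ} {m : Fin q → ℕ} :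
    m ∈ faaDiBrunoS q ↔ ∑ ℓ : Fin q, ((ℓ : ℕ) + 1) * m ℓ = q := by
  constructor
  · intro hm
    exact (Finset.mem_filter.1 hm).2
  · intro hm
    refine Finset.mem_filter.2 ⟨?_, hm⟩
    refine Finset.mem_image.2 ⟨fun ℓ => ⟨m ℓ, ?_⟩, Finset.mem_univ _, rfl⟩
    have h1 : m ℓ ≤ ((ℓ : ℕ) + 1) * m ℓ := Nat.le_mul_of_pos_left _ (Nat.succ_pos _)
    have h2 : ((ℓ : ℕ) + 1) * m ℓ ≤ ∑ ℓ' : Fin q, ((ℓ' : ℕ) + 1) * m ℓ' :=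
      Finset.single_le_sum (f := fun ℓ' : Fin q => ((ℓ' : ℕ) + 1) * m ℓ')
        (fun _ _ => Nat.zero_le _) (Finset.mem_univ ℓ)
    omega

noncomputable def bellD {q : ℕ} (m : Fin q → ℕ) : ℝ :=
  ∏ ℓ : Fin q, ((m ℓ).factorial : ℝ) * (((ℓ : ℕ) + 1).factorial : ℝ) ^ (m ℓ)

noncomputable def bellP {q : ℕ} (v : ℕ → ℝ) (m : Fin q → ℕ) : ℝ :=
  ∏ ℓ : Fin q, v ((ℓ : ℕ) + 1) ^ (m ℓ)

noncomputable def bellB (q : ℕ) (v : ℕ → ℝ) : ℝ :=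
  ∑ m ∈ faaDiBrunoS q, (q.factorial : ℝ) / bellD m * bellP v m

lemma bellD_pos {q : ℕ} (m : Fin q → ℕ) : 0 < bellD m := by
  refine Finset.prod_pos fun ℓ _ => ?_
  positivity

/-- padding a tuple with zeros -/
def padF {r b : ℕ} (m : Fin r → ℕ) : Fin b → ℕ :=
  fun ℓ => if h : (ℓ : ℕ) < r then m ⟨ℓ, h⟩ else 0

lemma prod_pad {r b : ℕ} (hrb : r ≤ b) (m : Fin r → ℕ) (G : ℕ → ℕ → ℝ)
    (hG : ∀ i, G i 0 = 1) :
    ∏ ℓ : Fin b, G (ℓ : ℕ) (padF m ℓ) = ∏ ℓ : Fin r, G (ℓ : ℕ) (m ℓ) := by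
  have h1 : ∏ ℓ : Fin b, G (ℓ : ℕ) (padF m ℓ)
      = ∏ i ∈ Finset.range b, G i (if h : i < r then m ⟨i, h⟩ else 0) := by
    rw [← Fin.prod_univ_eq_prod_range]
    rfl
  rw [h1, ← Finset.prod_subset (Finset.range_subset_range.2 hrb) ?h]
  · rw [← Fin.prod_univ_eq_prod_range]
    refine Finset.prod_congr rfl fun ℓ _ => ?_
    rw [dif_pos ℓ.2]
  · intro i _ hi
    rw [Finset.mem_range, not_lt] at hi
    rw [dif_neg (by omega), hG]

lemma sum_pad_nat {r b : ℕ} (hrb : r ≤ b) (m : Fin r → ℕ) :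
    ∑ ℓ : Fin b, ((ℓ : ℕ) + 1) * padF m ℓ = ∑ ℓ : Fin r, ((ℓ : ℕ) + 1) * m ℓ := by
  have h1 : ∑ ℓ : Fin b, ((ℓ : ℕ) + 1) * padF m ℓ
      = ∑ i ∈ Finset.range b, (i + 1) * (if h : i < r then m ⟨i, h⟩ else 0) := by
    rw [← Fin.sum_univ_eq_sum_range]
    rfl
  rw [h1, ← Finset.sum_subset (Finset.range_subset_range.2 hrb) ?h]
  · rw [← Fin.sum_univ_eq_sum_range]
    refine Finset.sum_congr rfl fun ℓ _ => ?_
    rw [dif_pos ℓ.2]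
  · intro i _ hi
    rw [Finset.mem_range, not_lt] at hi
    rw [dif_neg (by omega), Nat.mul_zero]

lemma bellD_pad {r b : ℕ} (hrb : r ≤ b) (m : Fin r → ℕ) :
    bellD (padF m : Fin b → ℕ) = bellD m := by
  unfold bellD
  exact prod_pad hrb m (fun i c => (c.factorial : ℝ) * ((i + 1).factorial : ℝ) ^ c)
    (fun i => by simp)

lemma bellP_pad {r b : ℕ} (hrb : r ≤ b) (v : ℕ → ℝ) (m : Fin r → ℕ) :
    bellP v (padF m : Fin b → ℕ) = bellP v m := by
  unfold bellP
  exact prod_pad hrb m (fun i c => v (i + 1) ^ c) (fun i => by simp)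

lemma bellB_zero (v : ℕ → ℝ) : bellB 0 v = 1 := by
  have h : faaDiBrunoS 0 = {(fun ℓ => (ℓ : ℕ) : Fin 0 → ℕ)} := by
    apply Finset.eq_singleton_iff_unique_mem.2
    constructor
    · exact mem_faaDiBrunoS.2 (by simp)
    · intro m _
      funext ℓ
      exact absurd ℓ.2 (Nat.not_lt_zero _)
  rw [bellB, h, Finset.sum_singleton, bellD, bellP]
  simp

lemma bell_inner (q : ℕ) (v : ℕ → ℝ) (ℓ : Fin (q+1)) :
    ∑ m ∈ faaDiBrunoS (q+1),
        (((((ℓ:ℕ)+1) * m ℓ : ℕ)) : ℝ) * ((q.factorial : ℝ) / bellD m * bellP v m)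
      = (q.choose ℓ : ℝ) * v ((ℓ:ℕ)+1) * bellB (q - ℓ) v := by
  set j : ℕ := (ℓ : ℕ) with hjdef
  have hj : j ≤ q := Nat.lt_succ_iff.1 ℓ.2
  set r : ℕ := q - j with hrdef
  have hrq : r + (j + 1) = q + 1 := by omega
  have hrle : r ≤ q + 1 := by omega
  -- the insertion map
  set ins : (Fin r → ℕ) → (Fin (q+1) → ℕ) :=
    fun m ℓ' => padF m ℓ' + (if ℓ' = ℓ then 1 else 0) with hins
  set res : (Fin (q+1) → ℕ) → (Fin r → ℕ) :=
    fun m' t => m' ⟨(t:ℕ), lt_of_lt_of_le t.2 hrle⟩ - (if ((t:ℕ)) = j then 1 else 0) with hres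
  -- restrict the sum to m with m ℓ ≠ 0
  rw [← Finset.sum_filter_of_ne (p := fun m => m ℓ ≠ 0)
    (by intro m _ hne; intro h0; apply hne; rw [h0]; simp)]
  -- facts about ins
  have hins_sum : ∀ m : Fin r → ℕ, (∑ ℓ' : Fin (q+1), ((ℓ':ℕ)+1) * ins m ℓ')
      = (∑ t : Fin r, ((t:ℕ)+1) * m t) + (j+1) := by
    intro m
    have : ∀ ℓ' : Fin (q+1), ((ℓ':ℕ)+1) * ins m ℓ'
        = ((ℓ':ℕ)+1) * padF m ℓ' + (if ℓ' = ℓ then j+1 else 0) := by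
      intro ℓ'
      by_cases h : ℓ' = ℓ
      · subst h; simp [hins, Nat.mul_add, hjdef]
      · simp [hins, h]
    rw [Finset.sum_congr rfl (fun ℓ' _ => this ℓ'), Finset.sum_add_distrib,
      sum_pad_nat hrle, Finset.sum_ite_eq' Finset.univ ℓ (fun _ => j+1)]
    simp
  have hins_mem : ∀ m ∈ faaDiBrunoS r,
      ins m ∈ (faaDiBrunoS (q+1)).filter (fun m' => m' ℓ ≠ 0) := by
    intro m hm
    refine Finset.mem_filter.2 ⟨mem_faaDiBrunoS.2 ?_, ?_⟩
    · rw [hins_sum m, mem_faaDiBrunoS.1 hm]; omega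
    · simp [hins]
  -- facts about res: for m' in the filtered set
  have hdec : ∀ m' ∈ (faaDiBrunoS (q+1)).filter (fun m' => m' ℓ ≠ 0),
      (∀ ℓ' : Fin (q+1), ((ℓ':ℕ)+1) * (m' ℓ' - (if ℓ' = ℓ then 1 else 0)) ≤ r) ∧
      (∑ ℓ' : Fin (q+1), ((ℓ':ℕ)+1) * (m' ℓ' - (if ℓ' = ℓ then 1 else 0))) = r := by
    intro m' hm'
    obtain ⟨hm'S, hm'ne⟩ := Finset.mem_filter.1 hm'
    have hsum := mem_faaDiBrunoS.1 hm'S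
    set dec : Fin (q+1) → ℕ := fun ℓ' => m' ℓ' - (if ℓ' = ℓ then 1 else 0) with hdecdef
    have key : (∑ ℓ' : Fin (q+1), ((ℓ':ℕ)+1) * dec ℓ') = r := by
      have h1 : ∑ ℓ' ∈ Finset.univ.erase ℓ, ((ℓ':ℕ)+1) * m' ℓ' + ((ℓ:ℕ)+1) * m' ℓ
          = q + 1 := by rw [Finset.sum_erase_add _ _ (Finset.mem_univ ℓ)]; exact hsum
      have h2 : ∑ ℓ' ∈ Finset.univ.erase ℓ, ((ℓ':ℕ)+1) * dec ℓ' + ((ℓ:ℕ)+1) * dec ℓ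
          = ∑ ℓ' : Fin (q+1), ((ℓ':ℕ)+1) * dec ℓ' :=
        Finset.sum_erase_add _ _ (Finset.mem_univ ℓ)
      have h3 : ∀ ℓ' ∈ Finset.univ.erase ℓ, ((ℓ':ℕ)+1) * dec ℓ' = ((ℓ':ℕ)+1) * m' ℓ' := by
        intro ℓ' hℓ'
        have : ℓ' ≠ ℓ := (Finset.mem_erase.1 hℓ').1
        simp [hdecdef, this]
      rw [Finset.sum_congr rfl h3] at h2
      have h4 : dec ℓ = m' ℓ - 1 := by simp [hdecdef]
      have h5 : 1 ≤ m' ℓ := Nat.one_le_iff_ne_zero.2 hm'ne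
      have h7 : m' ℓ = dec ℓ + 1 := by omega
      have h6 : ((ℓ:ℕ)+1) * m' ℓ = ((ℓ:ℕ)+1) * dec ℓ + ((ℓ:ℕ)+1) := by rw [h7]; ring
      omega
    refine ⟨?_, key⟩
    intro ℓ'
    calc ((ℓ':ℕ)+1) * dec ℓ' ≤ ∑ ℓ'' : Fin (q+1), ((ℓ'':ℕ)+1) * dec ℓ'' :=
          Finset.single_le_sum (f := fun ℓ'' : Fin (q+1) => ((ℓ'':ℕ)+1) * dec ℓ'')
            (fun _ _ => Nat.zero_le _) (Finset.mem_univ ℓ')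
      _ = r := key
  have hdec_high : ∀ m' ∈ (faaDiBrunoS (q+1)).filter (fun m' => m' ℓ ≠ 0),
      ∀ ℓ' : Fin (q+1), r ≤ (ℓ':ℕ) → m' ℓ' - (if ℓ' = ℓ then 1 else 0) = 0 := by
    intro m' hm' ℓ' hℓ'
    have h := (hdec m' hm').1 ℓ'
    by_contra hne
    have : 1 ≤ m' ℓ' - (if ℓ' = ℓ then 1 else 0) := Nat.one_le_iff_ne_zero.2 hne
    nlinarith [h, this]
  have hpad_res : ∀ m' ∈ (faaDiBrunoS (q+1)).filter (fun m' => m' ℓ ≠ 0),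
      (padF (res m') : Fin (q+1) → ℕ) = fun ℓ' => m' ℓ' - (if ℓ' = ℓ then 1 else 0) := by
    intro m' hm'
    funext ℓ'
    by_cases h : (ℓ' : ℕ) < r
    · simp only [padF, dif_pos h, hres]
      congr 1
      simp [hjdef, Fin.ext_iff]
    · simp only [padF, dif_neg h]
      exact (hdec_high m' hm' ℓ' (not_lt.1 h)).symm
  have hres_mem : ∀ m' ∈ (faaDiBrunoS (q+1)).filter (fun m' => m' ℓ ≠ 0),
      res m' ∈ faaDiBrunoS r := by
    intro m' hm'
    refine mem_faaDiBrunoS.2 ?_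
    have := sum_pad_nat (b := q+1) hrle (res m')
    rw [hpad_res m' hm'] at this
    rw [← this]
    exact (hdec m' hm').2
  -- left inverse
  have hleft : ∀ m ∈ faaDiBrunoS r, res (ins m) = m := by
    intro m _
    funext t
    have ht : ((t:ℕ)) < r := t.2
    simp only [hres, hins]
    by_cases h : (t : ℕ) = j
    · have hc : (⟨(t:ℕ), lt_of_lt_of_le t.2 hrle⟩ : Fin (q+1)) = ℓ := by
        apply Fin.ext; simp [h, hjdef]
      rw [if_pos hc, if_pos h]
      simp only [padF, dif_pos ht, Fin.eta]
      omega
    · have hc : (⟨(t:ℕ), lt_of_lt_of_le t.2 hrle⟩ : Fin (q+1)) ≠ ℓ := by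
        intro hc; apply h
        have := congrArg (fun x : Fin (q+1) => (x:ℕ)) hc
        simpa [hjdef] using this
      rw [if_neg hc, if_neg h]
      simp only [padF, dif_pos ht, Fin.eta, Nat.sub_zero, Nat.add_zero]
  -- right inverse
  have hright : ∀ m' ∈ (faaDiBrunoS (q+1)).filter (fun m' => m' ℓ ≠ 0),
      ins (res m') = m' := by
    intro m' hm'
    funext ℓ'
    have h5 : 1 ≤ m' ℓ := Nat.one_le_iff_ne_zero.2 (Finset.mem_filter.1 hm').2
    simp only [hins]
    rw [congrFun (hpad_res m' hm') ℓ']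
    by_cases h : ℓ' = ℓ
    · subst h; simp only [eq_self_iff_true, if_true]; omega
    · simp only [if_neg h]; omega
  -- value equality
  have hval : ∀ m ∈ faaDiBrunoS r,
      (q.choose j : ℝ) * v (j+1) * ((r.factorial : ℝ) / bellD m * bellP v m)
        = ((((j+1) * ins m ℓ : ℕ)) : ℝ)
            * ((q.factorial : ℝ) / bellD (ins m) * bellP v (ins m)) := by
    intro m _
    set t0 : ℕ := padF m ℓ with ht0
    have hinsℓ : ins m ℓ = t0 + 1 := by simp [hins, ht0]
    have hins_off : ∀ ℓ' : Fin (q+1), ℓ' ≠ ℓ → ins m ℓ' = padF m ℓ' := by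
      intro ℓ' h; simp [hins, h]
    -- bellD (ins m) = (t0+1) * (j+1)! * bellD m
    have hDins : bellD (ins m) = ((t0+1 : ℕ) : ℝ) * ((j+1).factorial : ℝ) * bellD m := by
      rw [← bellD_pad hrle m]
      unfold bellD
      rw [← Finset.prod_erase_mul _ _ (Finset.mem_univ ℓ),
          ← Finset.prod_erase_mul _ _ (Finset.mem_univ ℓ)]
      have he : ∀ ℓ' ∈ Finset.univ.erase ℓ,
          ((ins m ℓ').factorial : ℝ) * (((ℓ':ℕ)+1).factorial : ℝ) ^ (ins m ℓ')
            = (((padF m ℓ' : ℕ)).factorial : ℝ) * (((ℓ':ℕ)+1).factorial : ℝ) ^ ((padF m ℓ' : ℕ)) := by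
        intro ℓ' hℓ'
        rw [hins_off ℓ' (Finset.mem_erase.1 hℓ').1]
      rw [Finset.prod_congr rfl he, hinsℓ]
      have : ((t0+1).factorial : ℝ) = ((t0+1 : ℕ) : ℝ) * (t0.factorial : ℝ) := by
        rw [Nat.factorial_succ]; push_cast; ring
      rw [this, pow_succ]
      push_cast
      ring
    have hPins : bellP v (ins m) = v (j+1) * bellP v m := by
      rw [← bellP_pad hrle v m]
      unfold bellP
      rw [← Finset.prod_erase_mul _ _ (Finset.mem_univ ℓ),
          ← Finset.prod_erase_mul _ _ (Finset.mem_univ ℓ)]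
      have he : ∀ ℓ' ∈ Finset.univ.erase ℓ,
          v ((ℓ':ℕ)+1) ^ (ins m ℓ') = v ((ℓ':ℕ)+1) ^ ((padF m ℓ' : ℕ)) := by
        intro ℓ' hℓ'
        rw [hins_off ℓ' (Finset.mem_erase.1 hℓ').1]
      rw [Finset.prod_congr rfl he, hinsℓ, pow_succ]
      ring
    rw [hDins, hPins, hinsℓ]
    have hfac : (q.factorial : ℝ) = (q.choose j : ℝ) * (j.factorial : ℝ) * (r.factorial : ℝ) := by
      rw [hrdef]
      exact_mod_cast (Nat.choose_mul_factorial_mul_factorial hj).symm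
    have hfacj : ((j+1).factorial : ℝ) = ((j+1 : ℕ) : ℝ) * (j.factorial : ℝ) := by
      rw [Nat.factorial_succ]; push_cast; ring
    have hD : bellD m ≠ 0 := ne_of_gt (bellD_pos m)
    have hjf : (j.factorial : ℝ) ≠ 0 := by positivity
    have ht1 : ((t0+1 : ℕ) : ℝ) ≠ 0 := by positivity
    have hj1 : ((j+1 : ℕ) : ℝ) ≠ 0 := by positivity
    rw [hfac, hfacj]
    push_cast
    field_simp
  -- put it together
  simp only [bellB]
  rw [Finset.mul_sum]
  refine Finset.sum_nbij' (i := res) (j := ins) hres_mem hins_mem hright hleft ?_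
  intro m' hm'
  have h := hval (res m') (hres_mem m' hm')
  rw [hright m' hm'] at h
  exact h.symm

lemma bellB_rec (q : ℕ) (v : ℕ → ℝ) :
    bellB (q+1) v = ∑ j ∈ Finset.range (q+1), (q.choose j : ℝ) * v (j+1) * bellB (q-j) v := by
  have step1 : bellB (q+1) v
      = ∑ ℓ : Fin (q+1), ∑ m ∈ faaDiBrunoS (q+1),
          (((((ℓ:ℕ)+1) * m ℓ : ℕ)) : ℝ) * ((q.factorial : ℝ) / bellD m * bellP v m) := by
    rw [Finset.sum_comm]
    simp only [bellB]
    refine Finset.sum_congr rfl fun m hm => ?_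
    have hmem := mem_faaDiBrunoS.1 hm
    have hcast : ((q+1 : ℕ) : ℝ) = ∑ ℓ : Fin (q+1), ((((ℓ:ℕ)+1) * m ℓ : ℕ) : ℝ) := by
      exact_mod_cast hmem.symm
    have hfact : ((q+1).factorial : ℝ) = ((q+1 : ℕ) : ℝ) * (q.factorial : ℝ) := by
      rw [Nat.factorial_succ]; push_cast; ring
    calc ((q+1).factorial : ℝ)/bellD m * bellP v m
        = (∑ ℓ : Fin (q+1), ((((ℓ:ℕ)+1) * m ℓ : ℕ) : ℝ))
            * ((q.factorial:ℝ)/bellD m * bellP v m) := by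
          rw [hfact, hcast]; ring
      _ = ∑ ℓ : Fin (q+1), ((((ℓ:ℕ)+1) * m ℓ : ℕ) : ℝ)
            * ((q.factorial:ℝ)/bellD m * bellP v m) := Finset.sum_mul _ _ _
  rw [step1, Finset.sum_congr rfl (fun ℓ _ => bell_inner q v ℓ)]
  exact Fin.sum_univ_eq_sum_range (fun j => (q.choose j : ℝ) * v (j+1) * bellB (q-j) v) (q+1)


lemma itdW_isOpen {U : Set ℝ} (hU : IsOpen U) (n : ℕ) (f : ℝ → ℝ) {x : ℝ} (hx : x ∈ U) :
    iteratedDerivWithin n f U x = iteratedDeriv n f x := by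
  rw [iteratedDerivWithin, iteratedDeriv, iteratedFDerivWithin_of_isOpen n hU hx]

lemma hasDerivAt_itdW {U : Set ℝ} (hU : IsOpen U) {f : ℝ → ℝ} {n : ℕ∞} {m : ℕ}
    (hf : ContDiffOn ℝ n f U) (hm : (m : ℕ∞) < n) {x : ℝ} (hx : x ∈ U) :
    HasDerivAt (iteratedDerivWithin m f U) (iteratedDerivWithin (m+1) f U x) x := by
  have hUD : UniqueDiffOn ℝ U := hU.uniqueDiffOn
  have hm' : (m : WithTop ℕ∞) < ((n : ℕ∞) : WithTop ℕ∞) := by exact_mod_cast hm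
  have hdiff : DifferentiableOn ℝ (iteratedDerivWithin m f U) U :=
    hf.differentiableOn_iteratedDerivWithin hm' hUD
  have h1 : HasDerivWithinAt (iteratedDerivWithin m f U)
      (derivWithin (iteratedDerivWithin m f U) U x) U x :=
    (hdiff x hx).hasDerivWithinAt
  rw [← iteratedDerivWithin_succ] at h1
  exact h1.hasDerivAt (hU.mem_nhds hx)

lemma pascal_regroup (n : ℕ) (a b : ℕ → ℝ) :
    ∑ j ∈ Finset.range (n+1), (n.choose j : ℝ) * (a (j+1) * b (n-j) + a j * b (n-j+1))
      = ∑ j ∈ Finset.range (n+2), ((n+1).choose j : ℝ) * a j * b (n+1-j) := by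
  have hRHS : ∑ j ∈ Finset.range (n+2), ((n+1).choose j : ℝ) * a j * b (n+1-j)
      = (∑ i ∈ Finset.range (n+1), (((n.choose i : ℕ) : ℝ) + ((n.choose (i+1) : ℕ) : ℝ))
          * a (i+1) * b (n-i)) + a 0 * b (n+1) := by
    rw [Finset.sum_range_succ']
    congr 1
    · refine Finset.sum_congr rfl fun i _ => ?_
      have h1 : (n+1) - (i+1) = n - i := by omega
      have h2 : ((n+1).choose (i+1) : ℝ)
          = ((n.choose i : ℕ) : ℝ) + ((n.choose (i+1) : ℕ) : ℝ) := by
        rw [Nat.choose_succ_succ]; push_cast; ring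
      rw [h1, h2]
    · simp
  have hmid : ∑ j ∈ Finset.range (n+1), (n.choose j : ℝ) * a j * b (n-j+1)
      = (∑ i ∈ Finset.range (n+1), (n.choose (i+1) : ℝ) * a (i+1) * b (n-i)) + a 0 * b (n+1) := by
    rw [Finset.sum_range_succ' (fun j => (n.choose j : ℝ) * a j * b (n-j+1)) n]
    congr 1
    · rw [Finset.sum_range_succ]
      have hz : (n.choose (n+1) : ℝ) = 0 := by
        rw [Nat.choose_eq_zero_of_lt (by omega)]; simp
      rw [hz]
      simp only [zero_mul, add_zero]
      refine Finset.sum_congr rfl fun i hi => ?_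
      have h3 : n - (i+1) + 1 = n - i := by
        have := Finset.mem_range.1 hi; omega
      rw [h3]
    · simp
  calc ∑ j ∈ Finset.range (n+1), (n.choose j : ℝ) * (a (j+1) * b (n-j) + a j * b (n-j+1))
      = (∑ j ∈ Finset.range (n+1), (n.choose j : ℝ) * a (j+1) * b (n-j))
        + ∑ j ∈ Finset.range (n+1), (n.choose j : ℝ) * a j * b (n-j+1) := by
        rw [← Finset.sum_add_distrib]
        exact Finset.sum_congr rfl fun j _ => by ring
    _ = ∑ j ∈ Finset.range (n+2), ((n+1).choose j : ℝ) * a j * b (n+1-j) := by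
        rw [hmid, hRHS, ← add_assoc, ← Finset.sum_add_distrib]
        congr 1
        exact Finset.sum_congr rfl fun i _ => by push_cast; ring

lemma itdW_mul {U : Set ℝ} (hU : IsOpen U) {f g : ℝ → ℝ} (n : ℕ)
    (hf : ContDiffOn ℝ (n : ℕ∞) f U) (hg : ContDiffOn ℝ (n : ℕ∞) g U) {x : ℝ} (hx : x ∈ U) :
    iteratedDerivWithin n (fun s => f s * g s) U x
      = ∑ j ∈ Finset.range (n+1), (n.choose j : ℝ) * iteratedDerivWithin j f U x
          * iteratedDerivWithin (n-j) g U x := by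
  have hUD : UniqueDiffOn ℝ U := hU.uniqueDiffOn
  induction n generalizing x with
  | zero => simp [iteratedDerivWithin_zero]
  | succ n IH =>
    rw [iteratedDerivWithin_succ]
    have hle : ((n : ℕ∞) : WithTop ℕ∞) ≤ (((n+1 : ℕ) : ℕ∞) : WithTop ℕ∞) := by
      exact_mod_cast Nat.le_succ n
    have hfn : ContDiffOn ℝ (n : ℕ∞) f U := hf.of_le hle
    have hgn : ContDiffOn ℝ (n : ℕ∞) g U := hg.of_le hle
    have hEq : Set.EqOn (iteratedDerivWithin n (fun s => f s * g s) U)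
        (fun y => ∑ j ∈ Finset.range (n+1), (n.choose j : ℝ) * iteratedDerivWithin j f U y
          * iteratedDerivWithin (n-j) g U y) U := fun y hy => IH hfn hgn hy
    rw [derivWithin_congr hEq (hEq hx)]
    have hder : HasDerivWithinAt
        (fun y => ∑ j ∈ Finset.range (n+1), (n.choose j : ℝ) * iteratedDerivWithin j f U y
          * iteratedDerivWithin (n-j) g U y)
        (∑ j ∈ Finset.range (n+1), (n.choose j : ℝ) *
          (iteratedDerivWithin (j+1) f U x * iteratedDerivWithin (n-j) g U x
            + iteratedDerivWithin j f U x * iteratedDerivWithin (n-j+1) g U x)) U x := by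
      refine HasDerivWithinAt.fun_sum fun j hj => ?_
      have hj' : j ≤ n := Nat.lt_succ_iff.1 (Finset.mem_range.1 hj)
      have h1 : HasDerivAt (iteratedDerivWithin j f U) (iteratedDerivWithin (j+1) f U x) x :=
        hasDerivAt_itdW hU hf (by exact_mod_cast Nat.lt_succ_iff.2 hj') hx
      have h2 : HasDerivAt (iteratedDerivWithin (n-j) g U)
          (iteratedDerivWithin (n-j+1) g U x) x :=
        hasDerivAt_itdW hU hg (by exact_mod_cast (by omega : n - j < n + 1)) hx
      have := ((h1.const_mul ((n.choose j : ℝ))).fun_mul h2).hasDerivWithinAt (s := U)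
      convert this using 1
      ring
    rw [hder.derivWithin (hUD.uniqueDiffWithinAt hx)]
    exact pascal_regroup n (fun j => iteratedDerivWithin j f U x)
      (fun j => iteratedDerivWithin j g U x)

section PartFour

variable {U : Set ℝ} (hU : IsOpen U)

/-- iterated derivative of `exp (s * c)` -/
lemma itdW_exp_lin (hU : IsOpen U) (c : ℝ) (q : ℕ) {x : ℝ} (hx : x ∈ U) :
    iteratedDerivWithin q (fun s => Real.exp (s * c)) U x = c ^ q * Real.exp (x * c) := by
  have hUD : UniqueDiffOn ℝ U := hU.uniqueDiffOn
  induction q generalizing x with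
  | zero => simp [iteratedDerivWithin_zero]
  | succ q IH =>
    rw [iteratedDerivWithin_succ]
    have hEq : Set.EqOn (iteratedDerivWithin q (fun s => Real.exp (s * c)) U)
        (fun y => c ^ q * Real.exp (y * c)) U := fun y hy => IH hy
    rw [derivWithin_congr hEq (hEq hx)]
    have hder : HasDerivAt (fun y => c ^ q * Real.exp (y * c))
        (c ^ (q+1) * Real.exp (x * c)) x := by
      have h1 : HasDerivAt (fun y : ℝ => y * c) c x := by
        simpa using (hasDerivAt_id x).mul_const c
      have h2 := (h1.exp).const_mul (c ^ q)
      rw [show c ^ (q+1) * Real.exp (x * c) = c ^ q * (Real.exp (x * c) * c) by ring]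
      exact h2
    rw [(hder.hasDerivWithinAt (s := U)).derivWithin (hUD.uniqueDiffWithinAt hx)]

/-- Faà di Bruno / Bell polynomial form for `exp (g s * c)`. -/
lemma itdW_exp_bell (hU : IsOpen U) {g : ℝ → ℝ} {k : ℕ}
    (hg : ContDiffOn ℝ (k : ℕ∞) g U) (c : ℝ) :
    ∀ q, q ≤ k → ∀ x ∈ U,
      iteratedDerivWithin q (fun s => Real.exp (g s * c)) U x
        = Real.exp (g x * c)
            * bellB q (fun j => iteratedDerivWithin j g U x * c) := by
  have hUD : UniqueDiffOn ℝ U := hU.uniqueDiffOn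
  intro q
  induction q using Nat.strong_induction_on with
  | _ q IH =>
    match q with
    | 0 =>
      intro _ x hx
      simp [iteratedDerivWithin_zero, bellB_zero]
    | (q+1) =>
      intro hq x hx
      have hk1 : (1 : WithTop ℕ∞) ≤ ((k : ℕ∞) : WithTop ℕ∞) := by
        exact_mod_cast Nat.one_le_iff_ne_zero.2 (by omega : k ≠ 0)
      rw [iteratedDerivWithin_succ']
      -- rewrite the inner derivative
      have hEq : Set.EqOn (derivWithin (fun s => Real.exp (g s * c)) U)
          (fun y => (derivWithin g U y * c) * Real.exp (g y * c)) U := by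
        intro y hy
        have hgy : HasDerivWithinAt g (derivWithin g U y) U y :=
          ((hg.differentiableOn (by exact_mod_cast (by omega : k ≠ 0))) y hy).hasDerivWithinAt
        have := ((hgy.mul_const c).exp).derivWithin (hUD.uniqueDiffWithinAt hy)
        rw [this]; ring
      rw [iteratedDerivWithin_congr hEq hx]
      -- apply Leibniz
      have hq' : ((q : ℕ∞) : WithTop ℕ∞) ≤ ((k : ℕ∞) : WithTop ℕ∞) := by
        exact_mod_cast (by omega : q ≤ k)
      have hgd : ContDiffOn ℝ (q : ℕ∞) (derivWithin g U) U := by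
        apply hg.derivWithin hUD
        have : ((q+1 : ℕ) : WithTop ℕ∞) ≤ ((k : ℕ∞) : WithTop ℕ∞) := by
          exact_mod_cast (by omega : q + 1 ≤ k)
        exact_mod_cast this
      have hf1 : ContDiffOn ℝ (q : ℕ∞) (fun s => derivWithin g U s * c) U :=
        hgd.mul contDiffOn_const
      have hf2 : ContDiffOn ℝ (q : ℕ∞) (fun s => Real.exp (g s * c)) U := by
        have : ContDiffOn ℝ (q : ℕ∞) (fun s => g s * c) U :=
          (hg.of_le hq').mul contDiffOn_const
        exact Real.contDiff_exp.comp_contDiffOn this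
      rw [itdW_mul hU q hf1 hf2 hx]
      -- rewrite each term
      have hterm : ∀ j ∈ Finset.range (q+1),
          (q.choose j : ℝ) * iteratedDerivWithin j (fun s => derivWithin g U s * c) U x
              * iteratedDerivWithin (q-j) (fun s => Real.exp (g s * c)) U x
            = Real.exp (g x * c) * ((q.choose j : ℝ)
                * (iteratedDerivWithin (j+1) g U x * c)
                * bellB (q-j) (fun j' => iteratedDerivWithin j' g U x * c)) := by
        intro j hj
        have hjq : j ≤ q := Nat.lt_succ_iff.1 (Finset.mem_range.1 hj)
        have h1 : iteratedDerivWithin j (fun s => derivWithin g U s * c) U x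
            = iteratedDerivWithin (j+1) g U x * c := by
          have hcomm : (fun s => derivWithin g U s * c) = (fun s => c * derivWithin g U s) := by
            funext s; ring
          rw [hcomm, iteratedDerivWithin_const_mul hx hUD c ((hgd.of_le
            (by exact_mod_cast hjq : ((j : ℕ∞) : WithTop ℕ∞) ≤ ((q : ℕ∞) : WithTop ℕ∞))) x hx)]
          rw [← iteratedDerivWithin_succ']
          ring
        have h2 := IH (q - j) (by omega) (by omega) x hx
        rw [h1, h2]
        ring
      rw [Finset.sum_congr rfl hterm, ← Finset.mul_sum, bellB_rec q]
end PartFour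

noncomputable def phiFn {Ω : Type*} (U : Set ℝ) (g : ℝ → ℝ) (Z : Ω → ℝ) (r : ℕ)
    (t : ℝ) (ω : Ω) : ℝ :=
  ∑ q ∈ Finset.range (r+1), (r.choose q : ℝ) *
    (Z ω ^ (r - q) * Real.exp ((t + g t) * Z ω)
      * bellB q (fun j => iteratedDerivWithin j g U t * Z ω))

lemma sum_m_le {q : ℕ} {m : Fin q → ℕ} (hm : m ∈ faaDiBrunoS q) :
    (∑ ℓ : Fin q, m ℓ) ≤ q := by
  calc (∑ ℓ : Fin q, m ℓ) ≤ ∑ ℓ : Fin q, ((ℓ:ℕ)+1) * m ℓ :=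
        Finset.sum_le_sum fun ℓ _ => Nat.le_mul_of_pos_left _ (Nat.succ_pos _)
    _ = q := mem_faaDiBrunoS.1 hm

lemma bellP_mul_right {q : ℕ} (v : ℕ → ℝ) (c : ℝ) (m : Fin q → ℕ) :
    bellP (fun j => v j * c) m = bellP v m * c ^ (∑ ℓ : Fin q, m ℓ) := by
  unfold bellP
  rw [← Finset.prod_pow_eq_pow_sum, ← Finset.prod_mul_distrib]
  exact Finset.prod_congr rfl fun ℓ _ => by rw [mul_pow]

lemma phiFn_zero {Ω : Type*} (U : Set ℝ) (g : ℝ → ℝ) (Z : Ω → ℝ) (t : ℝ) (ω : Ω) :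
    phiFn U g Z 0 t ω = Real.exp ((t + g t) * Z ω) := by
  simp [phiFn, bellB_zero]

lemma phiFn_expand {Ω : Type*} (U : Set ℝ) (g : ℝ → ℝ) (Z : Ω → ℝ) (r : ℕ) (t : ℝ) (ω : Ω) :
    phiFn U g Z r t ω
      = ∑ q ∈ Finset.range (r+1), ∑ m ∈ faaDiBrunoS q,
          ((r.choose q : ℝ) * ((q.factorial : ℝ) / bellD m)
              * bellP (fun j => iteratedDerivWithin j g U t) m)
            * (Z ω ^ ((r - q) + ∑ ℓ : Fin q, m ℓ) * Real.exp ((t + g t) * Z ω)) := by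
  unfold phiFn bellB
  refine Finset.sum_congr rfl fun q _ => ?_
  rw [Finset.mul_sum, Finset.mul_sum]
  refine Finset.sum_congr rfl fun m _ => ?_
  rw [bellP_mul_right, pow_add]
  ring

lemma abs_bellP_le {q : ℕ} (v : ℕ → ℝ) (M : ℝ) (hM : ∀ j, 1 ≤ j → j ≤ q → |v j| ≤ M)
    (m : Fin q → ℕ) : |bellP v m| ≤ M ^ (∑ ℓ : Fin q, m ℓ) := by
  unfold bellP
  rw [Finset.abs_prod, ← Finset.prod_pow_eq_pow_sum]
  refine Finset.prod_le_prod (fun ℓ _ => by positivity) (fun ℓ _ => ?_)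
  rw [abs_pow]
  exact pow_le_pow_left₀ (abs_nonneg _) (hM ((ℓ:ℕ)+1) (by omega) (by omega)) _

section main
variable {Ω : Type*} [MeasurableSpace Ω] {μ : Measure Ω} [IsProbabilityMeasure μ]
  {U : Set ℝ} (hU : IsOpen U) {g : ℝ → ℝ} {k : ℕ} (hg : ContDiffOn ℝ (k : ℕ∞) g U)
  {Z : Ω → ℝ} (hZm : Measurable Z) (hZnn : ∀ ω, 0 ≤ Z ω)
  (hint : ∀ m ≤ k, ∀ θ ∈ U, Integrable (fun ω => Z ω ^ m * Real.exp ((θ + g θ) * Z ω)) μ)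

include hU hg hZm hZnn hint

lemma phiFn_meas (r : ℕ) (t : ℝ) : AEStronglyMeasurable (phiFn U g Z r t) μ := by
  have : Measurable (phiFn U g Z r t) := by
    apply Finset.measurable_sum
    intro q _
    apply Measurable.const_mul
    apply Measurable.mul
    · exact (hZm.pow_const _).mul (Real.measurable_exp.comp (hZm.const_mul _))
    · -- bellB as a finite sum of products
      apply Finset.measurable_sum
      intro m _
      apply Measurable.const_mul
      unfold bellP
      apply Finset.measurable_prod
      intro ℓ _
      exact ((hZm.const_mul _).pow_const _)
  exact this.aestronglyMeasurable

lemma phiFn_integrable {r : ℕ} (hr : r ≤ k) {t : ℝ} (ht : t ∈ U) :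
    Integrable (phiFn U g Z r t) μ := by
  have : phiFn U g Z r t = fun ω => ∑ q ∈ Finset.range (r+1), ∑ m ∈ faaDiBrunoS q,
      ((r.choose q : ℝ) * ((q.factorial : ℝ) / bellD m)
          * bellP (fun j => iteratedDerivWithin j g U t) m)
        * (Z ω ^ ((r - q) + ∑ ℓ : Fin q, m ℓ) * Real.exp ((t + g t) * Z ω)) := by
    funext ω; exact phiFn_expand U g Z r t ω
  rw [this]
  apply integrable_finset_sum
  intro q hq
  apply integrable_finset_sum
  intro m hm
  have hp : (r - q) + (∑ ℓ : Fin q, m ℓ) ≤ k := by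
    have h1 := sum_m_le hm
    have h2 := Finset.mem_range.1 hq
    omega
  exact (hint _ hp t ht).const_mul _


lemma phiFn_eq_itdW {r : ℕ} (hr : r ≤ k) {t : ℝ} (ht : t ∈ U) (ω : Ω) :
    iteratedDerivWithin r (fun s => Real.exp ((s + g s) * Z ω)) U t = phiFn U g Z r t ω := by
  set c := Z ω with hc
  have hsplit : (fun s => Real.exp ((s + g s) * c))
      = fun s => Real.exp (g s * c) * Real.exp (s * c) := by
    funext s; rw [← Real.exp_add]; congr 1; ring
  rw [hsplit]
  have hrk : ((r : ℕ∞) : WithTop ℕ∞) ≤ ((k : ℕ∞) : WithTop ℕ∞) := by exact_mod_cast hr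
  have hf1 : ContDiffOn ℝ (r : ℕ∞) (fun s => Real.exp (g s * c)) U :=
    Real.contDiff_exp.comp_contDiffOn ((hg.of_le hrk).mul contDiffOn_const)
  have hf2 : ContDiffOn ℝ (r : ℕ∞) (fun s => Real.exp (s * c)) U :=
    (Real.contDiff_exp.comp ((contDiff_id).mul contDiff_const)).contDiffOn
  rw [itdW_mul hU r hf1 hf2 ht]
  unfold phiFn
  refine Finset.sum_congr rfl fun q hq => ?_
  have hqr : q ≤ r := Nat.lt_succ_iff.1 (Finset.mem_range.1 hq)
  rw [itdW_exp_bell hU hg c q (le_trans hqr hr) t ht, itdW_exp_lin hU c (r-q) ht]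
  have hexp : Real.exp ((t + g t) * c) = Real.exp (g t * c) * Real.exp (t * c) := by
    rw [← Real.exp_add]; congr 1; ring
  rw [hexp]
  ring

lemma phiFn_hasDerivAt {r : ℕ} (hr : r < k) {t : ℝ} (ht : t ∈ U) (ω : Ω) :
    HasDerivAt (fun t' => phiFn U g Z r t' ω) (phiFn U g Z (r+1) t ω) t := by
  have hFc : ContDiffOn ℝ (k : ℕ∞) (fun s => Real.exp ((s + g s) * Z ω)) U :=
    Real.contDiff_exp.comp_contDiffOn (((contDiffOn_id).add hg).mul contDiffOn_const)
  have hrk : ((r : ℕ∞)) < ((k : ℕ∞)) := by exact_mod_cast hr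
  have h1 := hasDerivAt_itdW hU hFc hrk ht
  rw [phiFn_eq_itdW hU hg hZm hZnn hint (by omega : r+1 ≤ k) ht ω] at h1
  apply h1.congr_of_eventuallyEq
  filter_upwards [hU.mem_nhds ht] with s hs
  exact (phiFn_eq_itdW hU hg hZm hZnn hint (le_of_lt hr) hs ω).symm

lemma integral_phiFn_hasDerivAt {r : ℕ} (hr : r < k) {θ : ℝ} (hθ : θ ∈ U) :
    HasDerivAt (fun t => ∫ ω, phiFn U g Z r t ω ∂μ) (∫ ω, phiFn U g Z (r+1) θ ω ∂μ) θ := by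
  have hUD : UniqueDiffOn ℝ U := hU.uniqueDiffOn
  obtain ⟨ε, hε, hball⟩ := Metric.isOpen_iff.1 hU θ hθ
  set δ := ε/2 with hδdef
  have hδ : 0 < δ := by positivity
  have hKU : Metric.closedBall θ δ ⊆ U := by
    intro x hx
    apply hball
    rw [Metric.mem_ball]
    rw [Metric.mem_closedBall] at hx
    calc dist x θ ≤ ε/2 := hx
      _ < ε := by linarith
  have hKne : (Metric.closedBall θ δ).Nonempty := ⟨θ, Metric.mem_closedBall_self hδ.le⟩
  have hKc : IsCompact (Metric.closedBall θ δ) := isCompact_closedBall θ δ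
  -- bound on the derivatives of g on the closed ball
  have hFcont : ContinuousOn
      (fun t => ∑ j ∈ Finset.range (k+1), |iteratedDerivWithin j g U t|) U := by
    refine continuousOn_finset_sum _ fun j hj => ?_
    have hjk : ((j : ℕ∞) : WithTop ℕ∞) ≤ ((k : ℕ∞) : WithTop ℕ∞) := by
      exact_mod_cast (Nat.lt_succ_iff.1 (Finset.mem_range.1 hj))
    exact (hg.continuousOn_iteratedDerivWithin hjk hUD).abs
  obtain ⟨M, hM⟩ := hKc.exists_bound_of_continuousOn (hFcont.mono hKU)
  have hMj : ∀ j ≤ k, ∀ t ∈ Metric.closedBall θ δ, |iteratedDerivWithin j g U t| ≤ M := by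
    intro j hj t ht'
    have h1 : |iteratedDerivWithin j g U t|
        ≤ ∑ j' ∈ Finset.range (k+1), |iteratedDerivWithin j' g U t| :=
      Finset.single_le_sum (f := fun j' => |iteratedDerivWithin j' g U t|)
        (fun _ _ => abs_nonneg _) (Finset.mem_range.2 (by omega))
    have h2 := hM t ht'
    rw [Real.norm_eq_abs] at h2
    calc |iteratedDerivWithin j g U t|
        ≤ ∑ j' ∈ Finset.range (k+1), |iteratedDerivWithin j' g U t| := h1
      _ ≤ abs (∑ j' ∈ Finset.range (k+1), |iteratedDerivWithin j' g U t|) := le_abs_self _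
      _ ≤ M := h2
  -- maximum of the exponent on the closed ball
  have hhc : ContinuousOn (fun t => t + g t) (Metric.closedBall θ δ) :=
    (continuousOn_id.add (hg.continuousOn.mono hKU))
  obtain ⟨tstar, htK, hmax⟩ := hKc.exists_isMaxOn hKne hhc
  have hA : ∀ t ∈ Metric.closedBall θ δ, t + g t ≤ tstar + g tstar := fun t ht' => hmax ht'
  -- the dominating function
  set bound : Ω → ℝ := fun ω => ∑ q ∈ Finset.range (r+2), ∑ m ∈ faaDiBrunoS q,
    ((r+1).choose q : ℝ) * ((q.factorial : ℝ)/bellD m) * M ^ (∑ ℓ : Fin q, m ℓ)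
      * (Z ω ^ ((r+1-q) + ∑ ℓ : Fin q, m ℓ) * Real.exp ((tstar + g tstar) * Z ω)) with hbdef
  have hbound_int : Integrable bound μ := by
    apply integrable_finset_sum
    intro q hq
    apply integrable_finset_sum
    intro m hm
    have hp : (r+1-q) + (∑ ℓ : Fin q, m ℓ) ≤ k := by
      have h1 := sum_m_le hm
      have h2 := Finset.mem_range.1 hq
      omega
    exact (hint _ hp tstar (hKU htK)).const_mul _
  have habs : ∀ ω, ∀ t ∈ Metric.ball θ δ, |phiFn U g Z (r+1) t ω| ≤ bound ω := by
    intro ω t ht'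
    have htK' : t ∈ Metric.closedBall θ δ := Metric.ball_subset_closedBall ht'
    have htU : t ∈ U := hKU htK'
    rw [phiFn_expand]
    refine le_trans (Finset.abs_sum_le_sum_abs _ _) ?_
    apply Finset.sum_le_sum
    intro q hq
    refine le_trans (Finset.abs_sum_le_sum_abs _ _) ?_
    apply Finset.sum_le_sum
    intro m hm
    have hqk : q ≤ k := by
      have := Finset.mem_range.1 hq; omega
    rw [abs_mul]
    have hDpos := bellD_pos m
    have hM0 : 0 ≤ M :=
      (abs_nonneg _).trans (hMj 0 (Nat.zero_le _) θ (Metric.mem_closedBall_self hδ.le))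
    have hC0 : (0:ℝ) ≤ (((r+1).choose q : ℝ) * ((q.factorial : ℝ) / bellD m)) :=
      mul_nonneg (Nat.cast_nonneg _) (div_nonneg (Nat.cast_nonneg _) hDpos.le)
    have e1 : |(((r+1).choose q : ℝ) * ((q.factorial : ℝ) / bellD m)
        * bellP (fun j => iteratedDerivWithin j g U t) m)|
        ≤ (((r+1).choose q : ℝ) * ((q.factorial : ℝ)/bellD m)) * M ^ (∑ ℓ : Fin q, m ℓ) := by
      rw [abs_mul]
      have h1 : |(((r+1).choose q : ℝ) * ((q.factorial : ℝ) / bellD m))|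
          = ((r+1).choose q : ℝ) * ((q.factorial : ℝ) / bellD m) := abs_of_nonneg hC0
      rw [h1]
      refine mul_le_mul_of_nonneg_left ?_ hC0
      exact abs_bellP_le _ M (fun j h1j hjq => hMj j (le_trans hjq hqk) t htK') m
    have e2 : |Z ω ^ ((r+1-q) + ∑ ℓ : Fin q, m ℓ) * Real.exp ((t + g t) * Z ω)|
        ≤ Z ω ^ ((r+1-q) + ∑ ℓ : Fin q, m ℓ) * Real.exp ((tstar + g tstar) * Z ω) := by
      rw [abs_of_nonneg (mul_nonneg (pow_nonneg (hZnn ω) _) (Real.exp_pos _).le)]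
      refine mul_le_mul_of_nonneg_left ?_ (pow_nonneg (hZnn ω) _)
      exact Real.exp_le_exp.2 (mul_le_mul_of_nonneg_right (hA t htK') (hZnn ω))
    calc |(((r+1).choose q : ℝ) * ((q.factorial : ℝ) / bellD m)
          * bellP (fun j => iteratedDerivWithin j g U t) m)|
          * |Z ω ^ ((r+1-q) + ∑ ℓ : Fin q, m ℓ) * Real.exp ((t + g t) * Z ω)|
        ≤ ((((r+1).choose q : ℝ) * ((q.factorial : ℝ)/bellD m)) * M ^ (∑ ℓ : Fin q, m ℓ))
          * (Z ω ^ ((r+1-q) + ∑ ℓ : Fin q, m ℓ) * Real.exp ((tstar + g tstar) * Z ω)) :=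
          mul_le_mul e1 e2 (abs_nonneg _) (mul_nonneg hC0 (pow_nonneg hM0 _))
      _ = ((r+1).choose q : ℝ) * ((q.factorial : ℝ)/bellD m) * M ^ (∑ ℓ : Fin q, m ℓ)
          * (Z ω ^ ((r+1-q) + ∑ ℓ : Fin q, m ℓ) * Real.exp ((tstar + g tstar) * Z ω)) := by
          ring
  have key := hasDerivAt_integral_of_dominated_loc_of_deriv_le (μ := μ)
    (F := fun t ω => phiFn U g Z r t ω) (F' := fun t ω => phiFn U g Z (r+1) t ω)
    (bound := bound) (Metric.ball_mem_nhds θ hδ)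
    (Eventually.of_forall (fun t => phiFn_meas hU hg hZm hZnn hint r t))
    (phiFn_integrable hU hg hZm hZnn hint (le_of_lt hr) hθ)
    (phiFn_meas hU hg hZm hZnn hint (r+1) θ)
    (Eventually.of_forall (fun ω => by
      intro t ht'
      rw [Real.norm_eq_abs]
      exact habs ω t ht'))
    hbound_int
    (Eventually.of_forall (fun ω => by
      intro t ht'
      exact phiFn_hasDerivAt hU hg hZm hZnn hint hr (hKU (Metric.ball_subset_closedBall ht')) ω))
  exact key.2

lemma itdW_G_eq : ∀ r ≤ k, ∀ t ∈ U,
    iteratedDerivWithin r (fun t' => ∫ ω, Real.exp ((t' + g t') * Z ω) ∂μ) U t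
      = ∫ ω, phiFn U g Z r t ω ∂μ := by
  have hUD : UniqueDiffOn ℝ U := hU.uniqueDiffOn
  intro r
  induction r with
  | zero =>
    intro _ t ht
    rw [iteratedDerivWithin_zero]
    refine integral_congr_ae (Eventually.of_forall fun ω => ?_)
    exact (phiFn_zero U g Z t ω).symm
  | succ r IH =>
    intro hr t ht
    rw [iteratedDerivWithin_succ]
    have hEq : Set.EqOn
        (iteratedDerivWithin r (fun t' => ∫ ω, Real.exp ((t' + g t') * Z ω) ∂μ) U)
        (fun t' => ∫ ω, phiFn U g Z r t' ω ∂μ) U := fun y hy => IH (by omega) y hy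
    rw [derivWithin_congr hEq (hEq ht)]
    exact ((integral_phiFn_hasDerivAt hU hg hZm hZnn hint (by omega) ht).hasDerivWithinAt).derivWithin
      (hUD.uniqueDiffWithinAt ht)

lemma integral_phiFn_eq {θ : ℝ} (hθ : θ ∈ U) :
    ∫ ω, phiFn U g Z k θ ω ∂μ
      = ∑ q ∈ Finset.range (k+1), (k.choose q : ℝ) * ∑ m ∈ faaDiBrunoS q,
          ((q.factorial : ℝ) * ∫ ω, Z ω ^ (k-q) * Real.exp (θ * Z ω)
              * Real.exp (g θ * Z ω)
              * ∏ ℓ : Fin q, (iteratedDerivWithin ((ℓ:ℕ)+1) g U θ * Z ω) ^ (m ℓ) ∂μ)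
            / bellD m := by
  have hexpand : (fun ω => phiFn U g Z k θ ω)
      = fun ω => ∑ q ∈ Finset.range (k+1), ∑ m ∈ faaDiBrunoS q,
          ((k.choose q : ℝ) * ((q.factorial : ℝ) / bellD m)
              * bellP (fun j => iteratedDerivWithin j g U θ) m)
            * (Z ω ^ ((k - q) + ∑ ℓ : Fin q, m ℓ) * Real.exp ((θ + g θ) * Z ω)) :=
    funext (phiFn_expand U g Z k θ)
  have hintqm : ∀ q ∈ Finset.range (k+1), ∀ m ∈ faaDiBrunoS q,
      Integrable (fun ω =>
        ((k.choose q : ℝ) * ((q.factorial : ℝ) / bellD m)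
            * bellP (fun j => iteratedDerivWithin j g U θ) m)
          * (Z ω ^ ((k - q) + ∑ ℓ : Fin q, m ℓ) * Real.exp ((θ + g θ) * Z ω))) μ := by
    intro q hq m hm
    have hp : (k-q) + (∑ ℓ : Fin q, m ℓ) ≤ k := by
      have h1 := sum_m_le hm
      have h2 := Finset.mem_range.1 hq
      omega
    exact (hint _ hp θ hθ).const_mul _
  rw [hexpand, integral_finset_sum _ (fun q hq =>
    integrable_finset_sum _ (fun m hm => hintqm q hq m hm))]
  refine Finset.sum_congr rfl fun q hq => ?_
  rw [integral_finset_sum _ (fun m hm => hintqm q hq m hm), Finset.mul_sum]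
  refine Finset.sum_congr rfl fun m hm => ?_
  rw [integral_const_mul]
  have hrhs : (fun ω => Z ω ^ (k-q) * Real.exp (θ * Z ω) * Real.exp (g θ * Z ω)
      * ∏ ℓ : Fin q, (iteratedDerivWithin ((ℓ:ℕ)+1) g U θ * Z ω) ^ (m ℓ))
      = fun ω => bellP (fun j => iteratedDerivWithin j g U θ) m
          * (Z ω ^ ((k-q) + ∑ ℓ : Fin q, m ℓ) * Real.exp ((θ + g θ) * Z ω)) := by
    funext ω
    have h1 : (∏ ℓ : Fin q, (iteratedDerivWithin ((ℓ:ℕ)+1) g U θ * Z ω) ^ (m ℓ))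
        = bellP (fun j => iteratedDerivWithin j g U θ * Z ω) m := rfl
    rw [h1, bellP_mul_right, pow_add]
    have hexp : Real.exp ((θ + g θ) * Z ω)
        = Real.exp (θ * Z ω) * Real.exp (g θ * Z ω) := by
      rw [← Real.exp_add]; congr 1; ring
    rw [hexp]
    ring
  rw [hrhs, integral_const_mul]
  ring

end main


lemma itdW_fun_sum {U : Set ℝ} (hU : IsOpen U) {ι : Type*} (s : Finset ι) (F : ι → ℝ → ℝ)
    {n : ℕ} (hF : ∀ a ∈ s, ContDiffOn ℝ (n : ℕ∞) (F a) U) {x : ℝ} (hx : x ∈ U) :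
    iteratedDerivWithin n (fun t => ∑ a ∈ s, F a t) U x
      = ∑ a ∈ s, iteratedDerivWithin n (F a) U x := by
  have hUD : UniqueDiffOn ℝ U := hU.uniqueDiffOn
  induction s using Finset.cons_induction with
  | empty =>
    simp only [Finset.sum_empty]
    have h0 : (fun _ : ℝ => (0:ℝ)) = (0:ℝ) • (fun _ : ℝ => (0:ℝ)) := by funext t; simp
    rw [h0, iteratedDerivWithin_const_smul hx hUD (0:ℝ) contDiffWithinAt_const]
    simp
  | cons a s ha IH =>
    have hrw : (fun t => ∑ b ∈ Finset.cons a s ha, F b t)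
        = (F a + fun t => ∑ b ∈ s, F b t) := by
      funext t
      rw [Finset.sum_cons]
      rfl
    have hFa : ContDiffOn ℝ (n : ℕ∞) (F a) U := hF a (Finset.mem_cons_self a s)
    have hFs : ContDiffOn ℝ (n : ℕ∞) (fun t => ∑ b ∈ s, F b t) U :=
      ContDiffOn.sum fun b hb => hF b (Finset.mem_cons_of_mem hb)
    rw [hrw, iteratedDerivWithin_add hx hUD (hFa x hx) (hFs x hx), Finset.sum_cons,
      IH (fun b hb => hF b (Finset.mem_cons_of_mem hb))]

/-- in the implicit-function setup for `η`, Faà di Bruno's formula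
for the `k`-th derivative of `η`. -/
theorem implicit_eta_kth_derivative
    (k : ℕ) (hk : 1 ≤ k)
    {Ω : Type*} [MeasurableSpace Ω] (μ : MeasureTheory.Measure Ω) [IsProbabilityMeasure μ]
    (n d : ℕ) (b : Fin d → ℝ) (β : Matrix (Fin d) (Fin d) ℝ)
    (α : Fin d → Matrix (Fin d) (Fin d) ℝ) (hα : ∀ j, (α j).IsSymm)
    (lam : Fin n → ℝ) (hlam : ∀ i, 0 ≤ lam i)
    (κ : Fin n → Fin d → ℝ) (γ : Fin n → Fin d → ℝ)
    -- nonnegative random variables with m.g.f. finite near `0`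
    (Z : Fin n → Ω → ℝ) (hZmeas : ∀ i, Measurable (Z i)) (hZnn : ∀ i ω, 0 ≤ Z i ω)
    (ε₀ : ℝ) (hε₀ : 0 < ε₀)
    (hZmgf : ∀ i, ∀ θ : ℝ, |θ| < ε₀ → Integrable (fun ω => Real.exp (θ * Z i ω)) μ)
    -- a neighborhood `U` of `0`
    (U : Set ℝ) (hUopen : IsOpen U) (hU0 : (0 : ℝ) ∈ U)
    -- the implicit function `u*`
    (ustar : ℝ → Fin d → ℝ) (hu0 : ustar 0 = 0)
    (husmooth : ContDiffOn ℝ (k : ℕ∞) ustar U)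
    -- the relevant moments are finite
    (hZint : ∀ i : Fin n, ∀ m : ℕ, m ≤ k → ∀ θ ∈ U,
      Integrable (fun ω => Z i ω ^ m
        * Real.exp ((θ + ∑ a, ustar θ a * γ i a) * Z i ω)) μ)
    -- the defining system of nonlinear equations for `u*`
    (heq : ∀ θ ∈ U, ∀ j : Fin d,
      (∑ i, ustar θ i * β i j)
        - (1/2) * (∑ i, ∑ i', ustar θ i * α j i i' * ustar θ i')
        - (∑ i : Fin n,
            ((∫ ω, Real.exp ((θ + ∑ a, ustar θ a * γ i a) * Z i ω) ∂μ) - 1) * κ i j) = 0)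
    -- the definition of `η`
    (η : ℝ → ℝ)
    (hη : ∀ θ : ℝ, η θ = (∑ a, ustar θ a * b a)
      + ∑ i : Fin n, lam i
          * ((∫ ω, Real.exp ((θ + ∑ a, ustar θ a * γ i a) * Z i ω) ∂μ) - 1))
 :
    ∀ θ ∈ U,
      iteratedDeriv k η θ
        = (∑ a, iteratedDeriv k (fun θ' => ustar θ' a) θ * b a)
          + ∑ i : Fin n, lam i *
              ∑ q ∈ Finset.range (k + 1), (Nat.choose k q : ℝ) *
              ∑ m ∈ faaDiBrunoS q,
                ((Nat.factorial q : ℝ) *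
                    ∫ ω, Z i ω ^ (k - q) * Real.exp (θ * Z i ω)
                      * Real.exp ((∑ a, ustar θ a * γ i a) * Z i ω)
                      * ∏ ℓ : Fin q,
                          ((∑ a, iteratedDeriv ((ℓ : ℕ) + 1) (fun θ' => ustar θ' a) θ
                              * γ i a) * Z i ω) ^ (m ℓ) ∂μ)
                  / ∏ ℓ : Fin q,
                      (Nat.factorial (m ℓ) : ℝ)
                        * (Nat.factorial ((ℓ : ℕ) + 1) : ℝ) ^ (m ℓ) := by

  intro θ hθ
  have hUD : UniqueDiffOn ℝ U := hUopen.uniqueDiffOn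
  -- coordinates of `u*` are `C^k`
  have hua : ∀ a : Fin d, ContDiffOn ℝ (k : ℕ∞) (fun t => ustar t a) U := by
    intro a
    exact (ContinuousLinearMap.proj (R := ℝ) (φ := fun _ : Fin d => ℝ) a).contDiff.comp_contDiffOn
      husmooth
  -- the functions `g i`
  have hgic : ∀ i : Fin n, ContDiffOn ℝ (k : ℕ∞) (fun t => ∑ a, ustar t a * γ i a) U := by
    intro i
    apply ContDiffOn.sum
    intro a _
    exact (hua a).mul contDiffOn_const
  have hinti : ∀ i : Fin n, ∀ m ≤ k, ∀ t ∈ U,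
      Integrable (fun ω => Z i ω ^ m
        * Real.exp ((t + (fun t' => ∑ a, ustar t' a * γ i a) t) * Z i ω)) μ := by
    intro i m hm t ht
    exact hZint i m hm t ht
  -- the explicit derivative candidates
  set E : ℕ → ℝ → ℝ := fun r t =>
    (∑ a, iteratedDerivWithin r (fun t' => ustar t' a) U t * b a)
    + ∑ i, lam i * ((∫ ω, phiFn U (fun t' => ∑ a, ustar t' a * γ i a) (Z i) r t ω ∂μ)
        - (if r = 0 then 1 else 0)) with hE
  have hE0 : ∀ t, η t = E 0 t := by
    intro t
    rw [hη t]
    simp only [hE, iteratedDerivWithin_zero, if_pos rfl]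
    congr 1
    refine Finset.sum_congr rfl fun i _ => ?_
    congr 2
    refine integral_congr_ae (Eventually.of_forall fun ω => ?_)
    exact (phiFn_zero U (fun t' => ∑ a, ustar t' a * γ i a) (Z i) t ω).symm
  have hstep : ∀ r, r < k → ∀ t ∈ U, HasDerivAt (E r) (E (r+1) t) t := by
    intro r hr t ht
    have hrk : ((r : ℕ∞)) < ((k : ℕ∞)) := by exact_mod_cast hr
    have h1 : HasDerivAt (fun t' => ∑ a, iteratedDerivWithin r (fun s => ustar s a) U t' * b a)
        (∑ a, iteratedDerivWithin (r+1) (fun s => ustar s a) U t * b a) t := by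
      apply HasDerivAt.fun_sum
      intro a _
      exact (hasDerivAt_itdW hUopen (hua a) hrk ht).mul_const (b a)
    have h2 : HasDerivAt (fun t' => ∑ i, lam i *
          ((∫ ω, phiFn U (fun s => ∑ a, ustar s a * γ i a) (Z i) r t' ω ∂μ)
            - (if r = 0 then 1 else 0)))
        (∑ i, lam i * (∫ ω, phiFn U (fun s => ∑ a, ustar s a * γ i a) (Z i) (r+1) t ω ∂μ)) t := by
      apply HasDerivAt.fun_sum
      intro i _
      exact ((integral_phiFn_hasDerivAt hUopen (hgic i) (hZmeas i) (hZnn i)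
        (hinti i) hr ht).sub_const _).const_mul (lam i)
    have h3 := h1.add h2
    have h4 : E (r+1) t = (∑ a, iteratedDerivWithin (r+1) (fun s => ustar s a) U t * b a)
        + ∑ i, lam i * (∫ ω, phiFn U (fun s => ∑ a, ustar s a * γ i a) (Z i) (r+1) t ω ∂μ) := by
      simp only [hE, Nat.succ_ne_zero, if_false, sub_zero]
    rw [h4]
    exact h3
  have hmain : ∀ r ≤ k, ∀ t ∈ U, iteratedDerivWithin r η U t = E r t := by
    intro r
    induction r with
    | zero =>
      intro _ t ht
      rw [iteratedDerivWithin_zero]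
      exact hE0 t
    | succ r IH =>
      intro hr t ht
      rw [iteratedDerivWithin_succ]
      have hEq : Set.EqOn (iteratedDerivWithin r η U) (E r) U :=
        fun y hy => IH (by omega) y hy
      rw [derivWithin_congr hEq (hEq ht)]
      exact ((hstep r (by omega) t ht).hasDerivWithinAt).derivWithin
        (hUD.uniqueDiffWithinAt ht)
  -- iterated derivatives of the functions `g i`
  have hgderiv : ∀ i : Fin n, ∀ j ≤ k,
      iteratedDerivWithin j (fun t' => ∑ a, ustar t' a * γ i a) U θ
        = ∑ a, iteratedDeriv j (fun t' => ustar t' a) θ * γ i a := by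
    intro i j hj
    have hjk : ((j : ℕ∞) : WithTop ℕ∞) ≤ ((k : ℕ∞) : WithTop ℕ∞) := by exact_mod_cast hj
    have hswap : (fun t' => ∑ a, ustar t' a * γ i a)
        = fun t' => ∑ a, (fun s => γ i a * ustar s a) t' := by
      funext t'
      exact Finset.sum_congr rfl fun a _ => mul_comm _ _
    rw [hswap, itdW_fun_sum hUopen Finset.univ _
      (fun a _ => (contDiffOn_const.mul ((hua a).of_le hjk))) hθ]
    refine Finset.sum_congr rfl fun a _ => ?_
    rw [iteratedDerivWithin_const_mul hθ hUD (γ i a) (((hua a).of_le hjk) θ hθ)]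
    rw [itdW_isOpen hUopen j _ hθ]
    ring
  -- finish
  rw [← itdW_isOpen hUopen k η hθ, hmain k le_rfl θ hθ]
  simp only [hE, if_neg (by omega : ¬ k = 0), sub_zero]
  congr 1
  · refine Finset.sum_congr rfl fun a _ => ?_
    rw [itdW_isOpen hUopen k _ hθ]
  · refine Finset.sum_congr rfl fun i _ => ?_
    congr 1
    rw [integral_phiFn_eq hUopen (hgic i) (hZmeas i) (hZnn i) (hinti i) hθ]
    refine Finset.sum_congr rfl fun q hq => ?_
    congr 1
    refine Finset.sum_congr rfl fun m hm => ?_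
    congr 2
    refine integral_congr_ae (Eventually.of_forall fun ω => ?_)
    have hprod : ∏ ℓ : Fin q,
        (iteratedDerivWithin ((ℓ:ℕ)+1) (fun t' => ∑ a, ustar t' a * γ i a) U θ * Z i ω) ^ (m ℓ)
        = ∏ ℓ : Fin q,
          ((∑ a, iteratedDeriv ((ℓ:ℕ)+1) (fun t' => ustar t' a) θ * γ i a) * Z i ω) ^ (m ℓ) := by
      refine Finset.prod_congr rfl fun ℓ _ => ?_
      rw [hgderiv i ((ℓ:ℕ)+1) (by
        have h1 : (ℓ:ℕ) < q := ℓ.2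
        have h2 := Finset.mem_range.1 hq
        omega)]
    simp only [hprod]
end
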